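/- For every cool stateful SOS specification L, trace equivalence, cost equivalence, and termination equivalence are congruences on the operational model γ^{L²} of the reader–writer extension L²: each of these three two-sorted equivalence relations on (readers, writers) is compatible with all constructors of L² (all operators f of Θ on readers, and [−]_s, ret_s, s.−, and each f̄ on writers). -/

import Mathlib

/-! # Statement 12: trace, cost, and termination equivalence are congruences on the operational model of the reader–writer extension L² of a cool stateful SOS specification L -/
namespace RW

/-- A deterministic reader–writer transition system over a state set `S`:
`rstep p s = c` means `p,s → c`; `wstep c = .inl (d,s)` means `c →ˢ d`;
`wstep c = .inr (.inl d)` means `c → d`; `wstep c = .inr (.inr s)` means `c ↓ s`. -/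
structure DRW (S : Type) where
  Rd : Type
  Wr : Type
  rstep : Rd → S → Wr
  wstep : Wr → (Wr × S) ⊕ (Wr ⊕ S)

variable {S : Type}

/-- The output transition `c →ˢ d`. -/
def OutTr (M : DRW S) (c : M.Wr) (s : S) (d : M.Wr) : Prop := M.wstep c = .inl (d, s)

/-- The silent transition `c → d`. -/
def TauTr (M : DRW S) (c d : M.Wr) : Prop := M.wstep c = .inr (.inl d)

/-- The termination transition `c ↓ s`. -/
def DownTr (M : DRW S) (c : M.Wr) (s : S) : Prop := M.wstep c = .inr (.inr s)

/-- The weak silent transition `c ⇒ d`: a finite chain of silent steps. -/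
def WSil (M : DRW S) : M.Wr → M.Wr → Prop := Relation.ReflTransGen (TauTr M)

/-- The weak output transition `c ⇒ˢ d`: `c ⇒ c' →ˢ d` for some `c'`. -/
def WOut (M : DRW S) (c : M.Wr) (s : S) (d : M.Wr) : Prop :=
  ∃ c', WSil M c c' ∧ OutTr M c' s d

/-- The weak termination transition `c ⇓ s`: `c ⇒ c' ↓ s` for some `c'`. -/
def WDone (M : DRW S) (c : M.Wr) (s : S) : Prop :=
  ∃ c', WSil M c c' ∧ DownTr M c' s

/-- `ReachL M c l d`: from `c` there is a chain of weak output transitions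
producing the list `l` of states and ending in `d`. -/
def ReachL (M : DRW S) : M.Wr → List S → M.Wr → Prop
  | c, [], d => c = d
  | c, s :: l, d => ∃ c', WOut M c s c' ∧ ReachL M c' l d

/-- `TrcEntry M c n v` holds iff the `n`-th entry (0-indexed) of the trace
`trc^w(c)` is `v`, where `v = .inl s` tags an intermediate output state and
`v = .inr s` tags the final state of a finite trace. -/
def TrcEntry (M : DRW S) (c : M.Wr) (n : ℕ) (v : S ⊕ S) : Prop :=
  (∃ l d s d', ReachL M c l d ∧ l.length = n ∧ WOut M d s d' ∧ v = .inl s) ∨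
  (∃ l d s, ReachL M c l d ∧ l.length = n ∧ WDone M d s ∧ v = .inr s)

open Classical in
/-- The writer trace map `trc^w : X_w → 𝒮^∞`, with a (nonempty, finite or infinite)
trace encoded as a function `ℕ → Option (S ⊕ S)`: a finite trace `(s₁,…,sₙ,s)`
sends `0,…,n-1` to `some (.inl sᵢ₊₁)`, `n` to `some (.inr s)` and all larger
numbers to `none`; an infinite trace `(s₁,s₂,…)` sends each `n` to
`some (.inl sₙ₊₁)`. -/
noncomputable def trcW (M : DRW S) (c : M.Wr) : ℕ → Option (S ⊕ S) := fun n =>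
  if h : ∃ v, TrcEntry M c n v then some h.choose else none

/-- The reader trace map `trc^r : X_r → (𝒮^∞)^𝒮`: `trc^r(p)(s) = trc^w(c)` where
`p,s → c`. -/
noncomputable def trcR (M : DRW S) (p : M.Rd) (s : S) : ℕ → Option (S ⊕ S) :=
  trcW M (M.rstep p s)

open Classical in
/-- The writer cost map: `cstW M c = some (n,s)` iff `trc^w(c) = (s₁,…,sₙ,s)` is
finite, and `none` (i.e. `*`) iff `trc^w(c)` is infinite. -/
noncomputable def cstW (M : DRW S) (c : M.Wr) : Option (ℕ × S) :=
  if h : ∃ ns : ℕ × S, trcW M c ns.1 = some (.inr ns.2) then some h.choose else none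

/-- The reader cost map. -/
noncomputable def cstR (M : DRW S) (p : M.Rd) (s : S) : Option (ℕ × S) :=
  cstW M (M.rstep p s)

/-- The writer termination map: the last element of a finite trace, `none` (`*`)
for an infinite trace. -/
noncomputable def terW (M : DRW S) (c : M.Wr) : Option S := (cstW M c).map Prod.snd

/-- The reader termination map. -/
noncomputable def terR (M : DRW S) (p : M.Rd) (s : S) : Option S :=
  (cstR M p s).map Prod.snd

/-! ### Generic lemmas about deterministic reader–writer systems -/

section Lemmas

variable {M : DRW S}

lemma tau_det {c d d' : M.Wr} (h : TauTr M c d) (h' : TauTr M c d') : d = d' := by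
  unfold TauTr at h h'; rw [h] at h'; simpa using h'

lemma out_no_tau {c d x : M.Wr} {s : S} (h : OutTr M c s d) (h' : TauTr M c x) : False := by
  unfold OutTr at h; unfold TauTr at h'; rw [h] at h'; simp at h'

lemma down_no_tau {c x : M.Wr} {s : S} (h : DownTr M c s) (h' : TauTr M c x) : False := by
  unfold DownTr at h; unfold TauTr at h'; rw [h] at h'
  simp at h'

lemma out_ne_down {c d : M.Wr} {s s' : S} (h : OutTr M c s d) (h' : DownTr M c s') : False := by
  unfold OutTr at h; unfold DownTr at h'; rw [h] at h'; simp at h'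

lemma out_det {c d d' : M.Wr} {s s' : S} (h : OutTr M c s d) (h' : OutTr M c s' d') :
    s = s' ∧ d = d' := by
  unfold OutTr at h h'; rw [h] at h'
  obtain ⟨h1, h2⟩ := Prod.mk.injEq .. ▸ (Sum.inl.inj h')
  exact ⟨h2, h1⟩

lemma down_det {c : M.Wr} {s s' : S} (h : DownTr M c s) (h' : DownTr M c s') : s = s' := by
  unfold DownTr at h h'; rw [h] at h'; simpa using h'

lemma wsil_join {c a : M.Wr} (ha : WSil M c a) :
    ∀ b, WSil M c b → WSil M a b ∨ WSil M b a := by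
  induction ha using Relation.ReflTransGen.head_induction_on with
  | refl => exact fun b hb => Or.inl hb
  | head hstep htail ih =>
    intro b hb
    rcases Relation.ReflTransGen.cases_head hb with rfl | ⟨b1, hb1, hb2⟩
    · exact Or.inr (Relation.ReflTransGen.head hstep htail)
    · cases tau_det hstep hb1; exact ih b hb2

lemma wsil_eq_of_stuck {a b : M.Wr} (h : WSil M a b) (ha : ∀ x, ¬ TauTr M a x) : a = b := by
  rcases Relation.ReflTransGen.cases_head h with rfl | ⟨y, hy, _⟩
  · rfl
  · exact absurd hy (ha y)

lemma wout_det {c d d' : M.Wr} {s s' : S} (h : WOut M c s d) (h' : WOut M c s' d') :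
    s = s' ∧ d = d' := by
  obtain ⟨x, hx, hox⟩ := h; obtain ⟨y, hy, hoy⟩ := h'
  have hxy : x = y := by
    rcases wsil_join hx y hy with h2 | h2
    · exact wsil_eq_of_stuck h2 (fun z hz => out_no_tau hox hz)
    · exact (wsil_eq_of_stuck h2 (fun z hz => out_no_tau hoy hz)).symm
  subst hxy
  exact out_det hox hoy

lemma wout_wdone {c d : M.Wr} {s s' : S} (h : WOut M c s d) (h' : WDone M c s') : False := by
  obtain ⟨x, hx, hox⟩ := h; obtain ⟨y, hy, hoy⟩ := h'
  have hxy : x = y := by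
    rcases wsil_join hx y hy with h2 | h2
    · exact wsil_eq_of_stuck h2 (fun z hz => out_no_tau hox hz)
    · exact (wsil_eq_of_stuck h2 (fun z hz => down_no_tau hoy hz)).symm
  subst hxy
  exact out_ne_down hox hoy

lemma wdone_det {c : M.Wr} {s s' : S} (h : WDone M c s) (h' : WDone M c s') : s = s' := by
  obtain ⟨x, hx, hox⟩ := h; obtain ⟨y, hy, hoy⟩ := h'
  have hxy : x = y := by
    rcases wsil_join hx y hy with h2 | h2
    · exact wsil_eq_of_stuck h2 (fun z hz => down_no_tau hox hz)
    · exact (wsil_eq_of_stuck h2 (fun z hz => down_no_tau hoy hz)).symm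
  subst hxy
  exact down_det hox hoy

lemma reachL_det {l : List S} :
    ∀ {c : M.Wr} {l' : List S} {d d' : M.Wr}, ReachL M c l d → ReachL M c l' d' →
      l.length = l'.length → l = l' ∧ d = d' := by
  induction l with
  | nil =>
    intro c l' d d' h h' hlen
    cases l' with
    | nil => cases h; cases h'; exact ⟨rfl, rfl⟩
    | cons s l' => simp at hlen
  | cons s l ih =>
    intro c l' d d' h h' hlen
    cases l' with
    | nil => simp at hlen
    | cons s' l' =>
      obtain ⟨c1, h1, h2⟩ := h
      obtain ⟨c1', h1', h2'⟩ := h'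
      obtain ⟨rfl, rfl⟩ := wout_det h1 h1'
      obtain ⟨rfl, rfl⟩ := ih h2 h2' (by simpa using hlen)
      exact ⟨rfl, rfl⟩

lemma reachL_append {l1 : List S} :
    ∀ {c : M.Wr} {l2 : List S} {d : M.Wr},
      ReachL M c (l1 ++ l2) d ↔ ∃ e, ReachL M c l1 e ∧ ReachL M e l2 d := by
  induction l1 with
  | nil =>
    intro c l2 d
    constructor
    · intro h; exact ⟨c, rfl, h⟩
    · rintro ⟨e, rfl, h2⟩; exact h2
  | cons s l1 ih =>
    intro c l2 d
    constructor
    · rintro ⟨c1, h1, h2⟩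
      obtain ⟨e, he1, he2⟩ := ih.1 h2
      exact ⟨e, ⟨c1, h1, he1⟩, he2⟩
    · rintro ⟨e, ⟨c1, h1, h2⟩, h3⟩
      exact ⟨c1, h1, ih.2 ⟨e, h2, h3⟩⟩

lemma done_entry_le {c : M.Wr} {N N' : ℕ} {sf sf' : S}
    {l l' : List S} {d d' : M.Wr}
    (hr : ReachL M c l d) (hl : l.length = N) (hd : WDone M d sf)
    (hr' : ReachL M c l' d') (hl' : l'.length = N') (hd' : WDone M d' sf')
    (hle : N ≤ N') : N = N' := by
  by_contra hne
  have hlt : N < N' := lt_of_le_of_ne hle hne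
  have hsplit : l' = l'.take N ++ l'.drop N := (List.take_append_drop N l').symm
  rw [hsplit] at hr'
  obtain ⟨e, he1, he2⟩ := reachL_append.1 hr'
  have : l = l'.take N ∧ d = e := by
    refine reachL_det hr he1 ?_
    rw [hl, List.length_take, hl']
    omega
  obtain ⟨-, rfl⟩ := this
  cases hdrop : l'.drop N with
  | nil => rw [hdrop] at he2; have : (l'.drop N).length = l'.length - N := List.length_drop; rw [hdrop] at this; simp at this; omega
  | cons s0 rest =>
    rw [hdrop] at he2
    obtain ⟨c1, hc1, -⟩ := he2
    exact wout_wdone hc1 hd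

lemma done_entry_unique {c : M.Wr} {N N' : ℕ} {sf sf' : S}
    (h : TrcEntry M c N (.inr sf)) (h' : TrcEntry M c N' (.inr sf')) : N = N' ∧ sf = sf' := by
  rcases h with ⟨l, d, s, d', _, _, _, hv⟩ | ⟨l, d, s, hr, hl, hd, hv⟩
  · exact absurd hv (by simp)
  rcases h' with ⟨l2, d2, s2, d2', _, _, _, hv'⟩ | ⟨l', e, s', hr', hl', hd', hv'⟩
  · exact absurd hv' (by simp)
  obtain rfl : sf = s := by simpa using hv
  obtain rfl : sf' = s' := by simpa using hv'
  have hNN : N = N' := by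
    rcases le_total N N' with hle | hle
    · exact done_entry_le hr hl hd hr' hl' hd' hle
    · exact (done_entry_le hr' hl' hd' hr hl hd hle).symm
  subst hNN
  obtain ⟨rfl, rfl⟩ := reachL_det hr hr' (by omega)
  exact ⟨rfl, wdone_det hd hd'⟩

lemma trcEntry_unique {c : M.Wr} {n : ℕ} {v v' : S ⊕ S}
    (h : TrcEntry M c n v) (h' : TrcEntry M c n v') : v = v' := by
  rcases h with ⟨l, d, s, e, hr, hl, ho, rfl⟩ | ⟨l, d, s, hr, hl, hd, rfl⟩ <;>
    rcases h' with ⟨l', d', s', e', hr', hl', ho', rfl⟩ | ⟨l', d', s', hr', hl', hd', rfl⟩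
  · obtain ⟨rfl, rfl⟩ := reachL_det hr hr' (by omega)
    obtain ⟨rfl, rfl⟩ := wout_det ho ho'
    rfl
  · obtain ⟨rfl, rfl⟩ := reachL_det hr hr' (by omega)
    exact absurd hd' (fun hd' => wout_wdone ho hd')
  · obtain ⟨rfl, rfl⟩ := reachL_det hr hr' (by omega)
    exact absurd hd (fun hd => wout_wdone ho' hd)
  · obtain ⟨rfl, rfl⟩ := reachL_det hr hr' (by omega)
    rw [wdone_det hd hd']

lemma trcW_eq_some_iff {c : M.Wr} {n : ℕ} {v : S ⊕ S} :
    trcW M c n = some v ↔ TrcEntry M c n v := by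
  unfold trcW
  by_cases h : ∃ w, TrcEntry M c n w
  · rw [dif_pos h]
    constructor
    · intro hv
      obtain rfl : h.choose = v := by simpa using hv
      exact h.choose_spec
    · intro hv
      simpa using trcEntry_unique h.choose_spec hv
  · rw [dif_neg h]
    constructor
    · intro hv; exact absurd hv (by simp)
    · intro hv; exact absurd ⟨v, hv⟩ h

lemma trcW_eq_iff {c c' : M.Wr} :
    trcW M c = trcW M c' ↔ ∀ n v, (TrcEntry M c n v ↔ TrcEntry M c' n v) := by
  constructor
  · intro h n v
    constructor
    · intro hv
      exact trcW_eq_some_iff.1 (h ▸ trcW_eq_some_iff.2 hv)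
    · intro hv
      exact trcW_eq_some_iff.1 (h ▸ trcW_eq_some_iff.2 hv)
  · intro h
    funext n
    cases hc : trcW M c n with
    | some v =>
      exact (trcW_eq_some_iff.2 ((h n v).1 (trcW_eq_some_iff.1 hc))).symm
    | none =>
      cases hc' : trcW M c' n with
      | some v =>
        have := trcW_eq_some_iff.2 ((h n v).2 (trcW_eq_some_iff.1 hc'))
        rw [hc] at this; exact this
      | none => rfl

lemma cstW_eq_some_iff {c : M.Wr} {N : ℕ} {sf : S} :
    cstW M c = some (N, sf) ↔ TrcEntry M c N (.inr sf) := by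
  unfold cstW
  by_cases h : ∃ ns : ℕ × S, trcW M c ns.1 = some (.inr ns.2)
  · rw [dif_pos h]
    have hspec : TrcEntry M c h.choose.1 (.inr h.choose.2) := trcW_eq_some_iff.1 h.choose_spec
    constructor
    · intro hv
      have he : h.choose = (N, sf) := by simpa using hv
      rw [he] at hspec; exact hspec
    · intro hv
      obtain ⟨h1, h2⟩ := done_entry_unique hspec hv
      simp only [Option.some.injEq]
      exact Prod.ext h1 h2
  · rw [dif_neg h]
    constructor
    · intro hv; exact absurd hv (by simp)
    · intro hv; exact absurd ⟨(N, sf), trcW_eq_some_iff.2 hv⟩ h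

lemma cstW_eq_none_iff {c : M.Wr} :
    cstW M c = none ↔ ∀ N sf, ¬ TrcEntry M c N (.inr sf) := by
  constructor
  · intro h N sf hv
    rw [cstW_eq_some_iff.2 hv] at h; simp at h
  · intro h
    cases hc : cstW M c with
    | none => rfl
    | some p =>
      obtain ⟨N, sf⟩ := p
      exact absurd (cstW_eq_some_iff.1 hc) (h N sf)

lemma cstW_eq_iff {c c' : M.Wr} :
    cstW M c = cstW M c' ↔
      ∀ N sf, (TrcEntry M c N (.inr sf) ↔ TrcEntry M c' N (.inr sf)) := by
  constructor
  · intro h N sf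
    constructor
    · intro hv
      exact cstW_eq_some_iff.1 (h ▸ cstW_eq_some_iff.2 hv)
    · intro hv
      exact cstW_eq_some_iff.1 (h ▸ cstW_eq_some_iff.2 hv)
  · intro h
    cases hc : cstW M c with
    | some p =>
      obtain ⟨N, sf⟩ := p
      exact (cstW_eq_some_iff.2 ((h N sf).1 (cstW_eq_some_iff.1 hc))).symm
    | none =>
      cases hc' : cstW M c' with
      | some p =>
        obtain ⟨N, sf⟩ := p
        have := cstW_eq_some_iff.2 ((h N sf).2 (cstW_eq_some_iff.1 hc'))
        rw [hc] at this; simp at this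
      | none => rfl

lemma terW_eq_iff {c c' : M.Wr} :
    terW M c = terW M c' ↔
      ∀ sf, ((∃ N, TrcEntry M c N (.inr sf)) ↔ (∃ N, TrcEntry M c' N (.inr sf))) := by
  unfold terW
  constructor
  · intro h sf
    constructor
    · rintro ⟨N, hN⟩
      have h1 : cstW M c = some (N, sf) := cstW_eq_some_iff.2 hN
      rw [h1] at h
      cases hc' : cstW M c' with
      | none => rw [hc'] at h; simp at h
      | some p =>
        obtain ⟨N', sf'⟩ := p
        rw [hc'] at h
        obtain rfl : sf = sf' := by simpa using h
        exact ⟨N', cstW_eq_some_iff.1 hc'⟩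
    · rintro ⟨N, hN⟩
      have h1 : cstW M c' = some (N, sf) := cstW_eq_some_iff.2 hN
      rw [h1] at h
      cases hc : cstW M c with
      | none => rw [hc] at h; simp at h
      | some p =>
        obtain ⟨N', sf'⟩ := p
        rw [hc] at h
        obtain rfl : sf' = sf := by simpa using h
        exact ⟨N', cstW_eq_some_iff.1 hc⟩
  · intro h
    cases hc : cstW M c with
    | some p =>
      obtain ⟨N, sf⟩ := p
      obtain ⟨N', hN'⟩ := (h sf).1 ⟨N, cstW_eq_some_iff.1 hc⟩
      rw [cstW_eq_some_iff.2 hN']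
      rfl
    | none =>
      cases hc' : cstW M c' with
      | some p =>
        obtain ⟨N, sf⟩ := p
        obtain ⟨N', hN'⟩ := (h sf).2 ⟨N, cstW_eq_some_iff.1 hc'⟩
        rw [cstW_eq_some_iff.2 hN'] at hc
        simp at hc
      | none => rfl

lemma trcEntry_zero {c : M.Wr} {v : S ⊕ S} :
    TrcEntry M c 0 v ↔
      (∃ s d, WOut M c s d ∧ v = .inl s) ∨ (∃ s, WDone M c s ∧ v = .inr s) := by
  constructor
  · rintro (⟨l, d, s, d', hr, hl, ho, rfl⟩ | ⟨l, d, s, hr, hl, hd, rfl⟩)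
    · obtain rfl : l = [] := List.length_eq_zero_iff.1 hl
      cases hr
      exact Or.inl ⟨s, d', ho, rfl⟩
    · obtain rfl : l = [] := List.length_eq_zero_iff.1 hl
      cases hr
      exact Or.inr ⟨s, hd, rfl⟩
  · rintro (⟨s, d, ho, rfl⟩ | ⟨s, hd, rfl⟩)
    · exact Or.inl ⟨[], c, s, d, rfl, rfl, ho, rfl⟩
    · exact Or.inr ⟨[], c, s, rfl, rfl, hd, rfl⟩

lemma trcEntry_succ {c : M.Wr} {n : ℕ} {v : S ⊕ S} :
    TrcEntry M c (n + 1) v ↔ ∃ s c1, WOut M c s c1 ∧ TrcEntry M c1 n v := by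
  constructor
  · rintro (⟨l, d, s, d', hr, hl, ho, rfl⟩ | ⟨l, d, s, hr, hl, hd, rfl⟩)
    · cases l with
      | nil => simp at hl
      | cons s0 l' =>
        obtain ⟨c1, h1, h2⟩ := hr
        exact ⟨s0, c1, h1, Or.inl ⟨l', d, s, d', h2, by simpa using hl, ho, rfl⟩⟩
    · cases l with
      | nil => simp at hl
      | cons s0 l' =>
        obtain ⟨c1, h1, h2⟩ := hr
        exact ⟨s0, c1, h1, Or.inr ⟨l', d, s, h2, by simpa using hl, hd, rfl⟩⟩
  · rintro ⟨s0, c1, h1, (⟨l, d, s, d', hr, hl, ho, rfl⟩ | ⟨l, d, s, hr, hl, hd, rfl⟩)⟩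
    · exact Or.inl ⟨s0 :: l, d, s, d', ⟨c1, h1, hr⟩, by simp [hl], ho, rfl⟩
    · exact Or.inr ⟨s0 :: l, d, s, ⟨c1, h1, hr⟩, by simp [hl], hd, rfl⟩

lemma wout_tau {c d : M.Wr} (h : TauTr M c d) {s : S} {e : M.Wr} :
    WOut M c s e ↔ WOut M d s e := by
  constructor
  · rintro ⟨x, hx, ho⟩
    rcases Relation.ReflTransGen.cases_head hx with rfl | ⟨y, hy, hy2⟩
    · exact absurd h (fun h => out_no_tau ho h)
    · cases tau_det h hy
      exact ⟨x, hy2, ho⟩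
  · rintro ⟨x, hx, ho⟩
    exact ⟨x, Relation.ReflTransGen.head h hx, ho⟩

lemma wdone_tau {c d : M.Wr} (h : TauTr M c d) {s : S} :
    WDone M c s ↔ WDone M d s := by
  constructor
  · rintro ⟨x, hx, ho⟩
    rcases Relation.ReflTransGen.cases_head hx with rfl | ⟨y, hy, hy2⟩
    · exact absurd h (fun h => down_no_tau ho h)
    · cases tau_det h hy
      exact ⟨x, hy2, ho⟩
  · rintro ⟨x, hx, ho⟩
    exact ⟨x, Relation.ReflTransGen.head h hx, ho⟩

lemma trcEntry_tau {c d : M.Wr} (h : TauTr M c d) {n : ℕ} {v : S ⊕ S} :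
    TrcEntry M c n v ↔ TrcEntry M d n v := by
  cases n with
  | zero => rw [trcEntry_zero, trcEntry_zero]
            simp only [wout_tau h, wdone_tau h]
  | succ n => rw [trcEntry_succ, trcEntry_succ]
              simp only [wout_tau h]

lemma wout_out {c d0 : M.Wr} {s0 : S} (h : OutTr M c s0 d0) {s : S} {e : M.Wr} :
    WOut M c s e ↔ (s = s0 ∧ e = d0) := by
  constructor
  · rintro ⟨x, hx, ho⟩
    obtain rfl : c = x := wsil_eq_of_stuck hx (fun z hz => out_no_tau h hz)
    obtain ⟨rfl, rfl⟩ := out_det ho h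
    exact ⟨rfl, rfl⟩
  · rintro ⟨rfl, rfl⟩
    exact ⟨c, Relation.ReflTransGen.refl, h⟩

lemma wdone_out {c d0 : M.Wr} {s0 : S} (h : OutTr M c s0 d0) {s : S} :
    ¬ WDone M c s := by
  rintro ⟨x, hx, ho⟩
  obtain rfl : c = x := wsil_eq_of_stuck hx (fun z hz => out_no_tau h hz)
  exact out_ne_down h ho

lemma trcEntry_out_zero {c d0 : M.Wr} {s0 : S} (h : OutTr M c s0 d0) {v : S ⊕ S} :
    TrcEntry M c 0 v ↔ v = .inl s0 := by
  rw [trcEntry_zero]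
  constructor
  · rintro (⟨s, d, ho, rfl⟩ | ⟨s, hd, rfl⟩)
    · obtain ⟨rfl, rfl⟩ := (wout_out h).1 ho; rfl
    · exact absurd hd (wdone_out h)
  · rintro rfl
    exact Or.inl ⟨s0, d0, (wout_out h).2 ⟨rfl, rfl⟩, rfl⟩

lemma trcEntry_out_succ {c d0 : M.Wr} {s0 : S} (h : OutTr M c s0 d0) {n : ℕ} {v : S ⊕ S} :
    TrcEntry M c (n + 1) v ↔ TrcEntry M d0 n v := by
  rw [trcEntry_succ]
  constructor
  · rintro ⟨s, c1, h1, h2⟩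
    obtain ⟨rfl, rfl⟩ := (wout_out h).1 h1
    exact h2
  · intro h2
    exact ⟨s0, d0, (wout_out h).2 ⟨rfl, rfl⟩, h2⟩

lemma wout_down {c : M.Wr} {s0 : S} (h : DownTr M c s0) {s : S} {e : M.Wr} :
    ¬ WOut M c s e := by
  rintro ⟨x, hx, ho⟩
  obtain rfl : c = x := wsil_eq_of_stuck hx (fun z hz => down_no_tau h hz)
  exact out_ne_down ho h

lemma wdone_down {c : M.Wr} {s0 : S} (h : DownTr M c s0) {s : S} :
    WDone M c s ↔ s = s0 := by
  constructor
  · rintro ⟨x, hx, ho⟩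
    obtain rfl : c = x := wsil_eq_of_stuck hx (fun z hz => down_no_tau h hz)
    exact down_det ho h
  · rintro rfl
    exact ⟨c, Relation.ReflTransGen.refl, h⟩

lemma trcEntry_down_zero {c : M.Wr} {s0 : S} (h : DownTr M c s0) {v : S ⊕ S} :
    TrcEntry M c 0 v ↔ v = .inr s0 := by
  rw [trcEntry_zero]
  constructor
  · rintro (⟨s, d, ho, rfl⟩ | ⟨s, hd, rfl⟩)
    · exact absurd ho (wout_down h)
    · rw [(wdone_down h).1 hd]
  · rintro rfl
    exact Or.inr ⟨s0, (wdone_down h).2 rfl, rfl⟩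

lemma trcEntry_down_succ {c : M.Wr} {s0 : S} (h : DownTr M c s0) {n : ℕ} {v : S ⊕ S} :
    ¬ TrcEntry M c (n + 1) v := by
  rw [trcEntry_succ]
  rintro ⟨s, c1, h1, -⟩
  exact absurd h1 (wout_down h)

lemma trcEntry_wsil {c d : M.Wr} (h : WSil M c d) {n : ℕ} {v : S ⊕ S} :
    TrcEntry M c n v ↔ TrcEntry M d n v := by
  induction h using Relation.ReflTransGen.head_induction_on with
  | refl => exact Iff.rfl
  | head hstep _ ih => exact (trcEntry_tau hstep).trans ih

end Lemmas

end RW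
namespace SOS

/-- Terms over a single-sorted algebraic signature with operation symbols `O` of
arities `ar`, with variables from `V`. -/
inductive OTm (O : Type) (ar : O → ℕ) (V : Type) : Type
  | var : V → OTm O ar V
  | op : (f : O) → (Fin (ar f) → OTm O ar V) → OTm O ar V

/-- Closed terms over the signature. -/
abbrev Tm (O : Type) (ar : O → ℕ) : Type := OTm O ar Empty

variable {O : Type} {ar : O → ℕ} {S : Type}

/-- Substitution of terms for variables. -/
def OTm.subst {V V' : Type} : OTm O ar V → (V → OTm O ar V') → OTm O ar V'
  | .var v, σ => σ v
  | .op f as, σ => .op f (fun i => (as i).subst σ)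

/-- A cool stateful SOS specification over the signature `(O, ar)` and the state
set `S`, presented by its defining data.  For each operator `f`, either

* `f` is passive, given by the map `o : S → (t,s') ⊕ s'` assigning to the current
  state `s` the conclusion of the (unique, premise-free) rule for `f` at `s`:
  either a transition `f(x₁,…,xₙ),s → t,s'` with `t` a term over the variables
  `x₁,…,xₙ`, or a termination `f(x₁,…,xₙ),s ↓ s'`; or
* `f` is active with receiving position `j`, and its rules are the patience rules
  `x_j,s → y_j,s'  ⊢  f(x₁,…,x_j,…,xₙ),s → f(x₁,…,y_j,…,xₙ),s'` together with the
  rules `x_j,s ↓ s'  ⊢  f(x₁,…,xₙ),s → t,s''` resp. `f(x₁,…,xₙ),s ↓ s''` whose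
  conclusion `o s' = (t,s'') ⊕ s''` depends only on `s'` (not on `s`), where `t`
  is a term over the variables `x₁,…,xₙ` other than `x_j`. -/
structure CoolSpec (O : Type) (ar : O → ℕ) (S : Type) where
  mode : (f : O) →
    (S → (OTm O ar (Fin (ar f)) × S) ⊕ S) ⊕
    (Σ j : Fin (ar f), S → (OTm O ar {i : Fin (ar f) // i ≠ j} × S) ⊕ S)

/-- Update of an argument tuple at position `j`. -/
def updFn {f : O} (as : Fin (ar f) → Tm O ar) (j : Fin (ar f)) (p : Tm O ar) :
    Fin (ar f) → Tm O ar :=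
  fun i => if i = j then p else as i

/-- The operational model `γ^L` of the stateful SOS specification determined by a
cool specification: `stepL C p s = .inl (p',s')` means `p,s → p',s'`, and
`stepL C p s = .inr s'` means `p,s ↓ s'`. -/
def stepL (C : CoolSpec O ar S) : Tm O ar → S → (Tm O ar × S) ⊕ S
  | .var v, _ => nomatch v
  | .op f as, s =>
    match C.mode f with
    | .inl o =>
        match o s with
        | .inl (t, s') => .inl (t.subst (fun i => as i), s')
        | .inr s' => .inr s'
    | .inr ⟨j, o⟩ =>
        match stepL C (as j) s with
        | .inl (p', s') => .inl (.op f (updFn as j p'), s')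
        | .inr s' =>
            match o s' with
            | .inl (t, s'') => .inl (t.subst (fun i => as i.1), s'')
            | .inr s'' => .inr s''

/-- Writers of the reader–writer extension `L²` of a cool specification `C`.
Readers are the closed `Θ`-terms. -/
inductive WTm (C : CoolSpec O ar S) : Type
  /-- The writer `[p]_s`. -/
  | run : Tm O ar → S → WTm C
  /-- The writer `ret_s`. -/
  | ret : S → WTm C
  /-- The writer `s.c`. -/
  | out : S → WTm C → WTm C
  /-- The writer `f̄(p₁,…,c,…,pₙ)` for an active operator `f` with receiving
  position `j` (with the writer argument in position `j`). -/
  | act : (f : O) → (j : Fin (ar f)) →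
      (o : S → (OTm O ar {i : Fin (ar f) // i ≠ j} × S) ⊕ S) →
      C.mode f = .inr ⟨j, o⟩ →
      ({i : Fin (ar f) // i ≠ j} → Tm O ar) → WTm C → WTm C

/-- The reader semantics of `L²`: `rstep2 C p s` is the unique writer `c` with
`p,s → c`. -/
def rstep2 (C : CoolSpec O ar S) (t : Tm O ar) (s : S) : WTm C :=
  match t with
  | .var v => nomatch v
  | .op f as =>
    match h : C.mode f with
    | .inl o =>
        match o s with
        | .inl (t', s') => .out s' (.run (t'.subst (fun i => as i)) s')
        | .inr s' => .ret s'
    | .inr ⟨j, o⟩ => .act f j o h (fun i => as i.1) (.run (as j) s)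

/-- The writer semantics of `L²`: `wstep2 C c = .inl (d,s)` means `c →ˢ d`,
`wstep2 C c = .inr (.inl d)` means `c → d`, and `wstep2 C c = .inr (.inr s)` means
`c ↓ s`. -/
def wstep2 (C : CoolSpec O ar S) : WTm C → (WTm C × S) ⊕ (WTm C ⊕ S)
  | .run p s => .inr (.inl (rstep2 C p s))
  | .ret s => .inr (.inr s)
  | .out s c => .inl (c, s)
  | .act f j o h ps c =>
      match wstep2 C c with
      | .inl (d, s) => .inl (.act f j o h ps d, s)
      | .inr (.inl d) => .inr (.inl (.act f j o h ps d))
      | .inr (.inr s') =>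
          match o s' with
          | .inl (t, s'') => .inl (.run (t.subst (fun i => ps i)) s'', s'')
          | .inr s'' => .inr (.inr s'')

/-- The operational model `γ^{L²}` of the reader–writer extension `L²` as a
deterministic reader–writer transition system. -/
def L2Model (C : CoolSpec O ar S) : RW.DRW S where
  Rd := Tm O ar
  Wr := WTm C
  rstep := rstep2 C
  wstep := wstep2 C

end SOS

namespace SOS

open RW

variable {O : Type} {ar : O → ℕ} {S : Type}

/-- A two-sorted relation on (readers, writers) of `L²` is a congruence if it is
compatible with all constructors of `L²`: all operators `f` of `Θ` on readers, and
the writer constructors `[−]_s`, `ret_s`, `s.−` and each `f̄`. -/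
def IsCongrL2 (C : CoolSpec O ar S) (Er : Tm O ar → Tm O ar → Prop)
    (Ew : WTm C → WTm C → Prop) : Prop :=
  (∀ (f : O) (as as' : Fin (ar f) → Tm O ar),
      (∀ i, Er (as i) (as' i)) → Er (.op f as) (.op f as')) ∧
  (∀ (p p' : Tm O ar) (s : S), Er p p' → Ew (.run p s) (.run p' s)) ∧
  (∀ s : S, Ew (.ret s) (.ret s)) ∧
  (∀ (s : S) (c c' : WTm C), Ew c c' → Ew (.out s c) (.out s c')) ∧
  (∀ (f : O) (j : Fin (ar f)) o (h : C.mode f = .inr ⟨j, o⟩)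
      (ps ps' : {i : Fin (ar f) // i ≠ j} → Tm O ar) (c c' : WTm C),
      (∀ i, Er (ps i) (ps' i)) → Ew c c' →
      Ew (.act f j o h ps c) (.act f j o h ps' c'))

/-! ### Basic lemmas about the operational model of `L²` -/

lemma subst_comp {V V' V'' : Type} (t : OTm O ar V) (τ : V → OTm O ar V')
    (σ : V' → OTm O ar V'') :
    (t.subst τ).subst σ = t.subst (fun v => (τ v).subst σ) := by
  induction t with
  | var v => rfl
  | op f as ih =>
    simp only [OTm.subst, OTm.op.injEq, heq_eq_eq, true_and]
    funext i
    exact ih i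

section L2

variable {C : CoolSpec O ar S}

lemma tau_run (p : Tm O ar) (s : S) :
    TauTr (L2Model C) (.run p s) (rstep2 C p s) := rfl

lemma out_out (s : S) (c : WTm C) : OutTr (L2Model C) (.out s c) s c := rfl

lemma down_ret (s : S) : DownTr (L2Model C) (.ret s : WTm C) s := rfl

lemma rstep2_op {f : O} {as : Fin (ar f) → Tm O ar} {s : S} :
    rstep2 C (.op f as) s =
      (match h : C.mode f with
        | .inl o =>
          match o s with
          | .inl (t', s') => WTm.out s' (.run (t'.subst fun i => as i) s')
          | .inr s' => .ret s'
        | .inr ⟨j, o⟩ => .act f j o h (fun i => as i.1) (.run (as j) s)) := rfl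

lemma rstep2_op_passive_out {f : O} {o : S → (OTm O ar (Fin (ar f)) × S) ⊕ S}
    (hm : C.mode f = .inl o) {as : Fin (ar f) → Tm O ar} {s s1 : S}
    {t' : OTm O ar (Fin (ar f))} (ho : o s = .inl (t', s1)) :
    rstep2 C (.op f as) s = .out s1 (.run (t'.subst (fun i => as i)) s1) := by
  rw [rstep2_op]
  split
  · next o' heq =>
    rw [hm] at heq
    obtain rfl : o = o' := Sum.inl.inj heq
    rw [ho]
  · next j' o' heq =>
    rw [hm] at heq
    simp at heq

lemma rstep2_op_passive_ret {f : O} {o : S → (OTm O ar (Fin (ar f)) × S) ⊕ S}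
    (hm : C.mode f = .inl o) {as : Fin (ar f) → Tm O ar} {s s1 : S}
    (ho : o s = .inr s1) :
    rstep2 C (.op f as) s = .ret s1 := by
  rw [rstep2_op]
  split
  · next o' heq =>
    rw [hm] at heq
    obtain rfl : o = o' := Sum.inl.inj heq
    rw [ho]
  · next j' o' heq =>
    rw [hm] at heq
    simp at heq

lemma rstep2_op_active {f : O} {j : Fin (ar f)}
    {o : S → (OTm O ar {i : Fin (ar f) // i ≠ j} × S) ⊕ S}
    (hm : C.mode f = .inr ⟨j, o⟩) {as : Fin (ar f) → Tm O ar} {s : S} :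
    rstep2 C (.op f as) s = .act f j o hm (fun i => as i.1) (.run (as j) s) := by
  rw [rstep2_op]
  split
  · next o' heq =>
    rw [hm] at heq
    simp at heq
  · next j' o' heq =>
    rw [hm] at heq
    have h2 : (⟨j, o⟩ : Σ j : Fin (ar f), S → (OTm O ar {i : Fin (ar f) // i ≠ j} × S) ⊕ S)
        = ⟨j', o'⟩ := Sum.inr.inj heq
    injection h2 with hj ho2
    subst hj
    obtain rfl : o = o' := eq_of_heq ho2
    rfl

lemma wstep2_act {f : O} {j : Fin (ar f)}
    {o : S → (OTm O ar {i : Fin (ar f) // i ≠ j} × S) ⊕ S}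
    {h : C.mode f = .inr ⟨j, o⟩} {ps : {i : Fin (ar f) // i ≠ j} → Tm O ar}
    {c : WTm C} :
    wstep2 C (.act f j o h ps c) =
      match wstep2 C c with
      | .inl (d, s) => .inl (.act f j o h ps d, s)
      | .inr (.inl d) => .inr (.inl (.act f j o h ps d))
      | .inr (.inr s') =>
          match o s' with
          | .inl (t, s'') => .inl (.run (t.subst (fun i => ps i)) s'', s'')
          | .inr s'' => .inr (.inr s'') := rfl

variable {f : O} {j : Fin (ar f)}
    {o : S → (OTm O ar {i : Fin (ar f) // i ≠ j} × S) ⊕ S}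
    {h : C.mode f = .inr ⟨j, o⟩} {ps : {i : Fin (ar f) // i ≠ j} → Tm O ar}

lemma act_tau {c d : WTm C} (hc : TauTr (L2Model C) c d) :
    TauTr (L2Model C) (.act f j o h ps c) (.act f j o h ps d) := by
  have hc' : wstep2 C c = .inr (.inl d) := hc
  show wstep2 C _ = _
  rw [wstep2_act, hc']
  rfl

lemma act_out {c d : WTm C} {s : S} (hc : OutTr (L2Model C) c s d) :
    OutTr (L2Model C) (.act f j o h ps c) s (.act f j o h ps d) := by
  have hc' : wstep2 C c = .inl (d, s) := hc
  show wstep2 C _ = _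
  rw [wstep2_act, hc']
  rfl

lemma act_down_out {c : WTm C} {s' s'' : S} {t : OTm O ar {i : Fin (ar f) // i ≠ j}}
    (hc : DownTr (L2Model C) c s') (ho : o s' = .inl (t, s'')) :
    OutTr (L2Model C) (.act f j o h ps c) s'' (.run (t.subst (fun i => ps i)) s'') := by
  have hc' : wstep2 C c = .inr (.inr s') := hc
  show wstep2 C _ = _
  rw [wstep2_act, hc']
  simp only [ho]
  rfl

lemma act_down_done {c : WTm C} {s' s'' : S}
    (hc : DownTr (L2Model C) c s') (ho : o s' = .inr s'') :
    DownTr (L2Model C) (.act f j o h ps c) s'' := by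
  have hc' : wstep2 C c = .inr (.inr s') := hc
  show wstep2 C _ = _
  rw [wstep2_act, hc']
  simp only [ho]
  rfl

lemma act_tau_inv {c x : WTm C}
    (hx : TauTr (L2Model C) (.act f j o h ps c) x) :
    ∃ d, x = .act f j o h ps d ∧ TauTr (L2Model C) c d := by
  have hx' : wstep2 C (.act f j o h ps c) = .inr (.inl x) := hx
  rw [wstep2_act] at hx'
  cases hc : wstep2 C c with
  | inl p =>
    obtain ⟨d, s⟩ := p
    rw [hc] at hx'
    dsimp only at hx'
    simp at hx'
  | inr q =>
    cases q with
    | inl d =>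
      rw [hc] at hx'
      dsimp only at hx'
      refine ⟨d, ?_, hc⟩
      simpa using (Sum.inl.inj (Sum.inr.inj hx')).symm
    | inr s' =>
      rw [hc] at hx'
      dsimp only at hx'
      cases ho : o s' with
      | inl ts =>
        obtain ⟨t, s''⟩ := ts
        rw [ho] at hx'
        dsimp only at hx'
        simp at hx'
      | inr s'' =>
        rw [ho] at hx'
        dsimp only at hx'
        simp at hx'

lemma act_out_inv {c x : WTm C} {s : S}
    (hx : OutTr (L2Model C) (.act f j o h ps c) s x) :
    (∃ d, x = .act f j o h ps d ∧ OutTr (L2Model C) c s d) ∨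
    (∃ s' t, DownTr (L2Model C) c s' ∧ o s' = .inl (t, s) ∧
      x = .run (t.subst (fun i => ps i)) s) := by
  have hx' : wstep2 C (.act f j o h ps c) = .inl (x, s) := hx
  rw [wstep2_act] at hx'
  cases hc : wstep2 C c with
  | inl p =>
    obtain ⟨d, s0⟩ := p
    rw [hc] at hx'
    dsimp only at hx'
    have h2 := Sum.inl.inj hx'
    obtain ⟨h3, h4⟩ := Prod.mk.injEq .. ▸ h2
    subst h4
    exact Or.inl ⟨d, h3.symm, hc⟩
  | inr q =>
    cases q with
    | inl d =>
      rw [hc] at hx'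
      dsimp only at hx'
      simp at hx'
    | inr s' =>
      rw [hc] at hx'
      dsimp only at hx'
      cases ho : o s' with
      | inl ts =>
        obtain ⟨t, s''⟩ := ts
        rw [ho] at hx'
        dsimp only at hx'
        have h2 := Sum.inl.inj hx'
        obtain ⟨h3, h4⟩ := Prod.mk.injEq .. ▸ h2
        subst h4
        exact Or.inr ⟨s', t, hc, ho, h3.symm⟩
      | inr s'' =>
        rw [ho] at hx'
        dsimp only at hx'
        simp at hx'

lemma act_down_inv {c : WTm C} {s : S}
    (hx : DownTr (L2Model C) (.act f j o h ps c) s) :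
    ∃ s', DownTr (L2Model C) c s' ∧ o s' = .inr s := by
  have hx' : wstep2 C (.act f j o h ps c) = .inr (.inr s) := hx
  rw [wstep2_act] at hx'
  cases hc : wstep2 C c with
  | inl p =>
    obtain ⟨d, s0⟩ := p
    rw [hc] at hx'
    dsimp only at hx'
    simp at hx'
  | inr q =>
    cases q with
    | inl d =>
      rw [hc] at hx'
      dsimp only at hx'
      simp at hx'
    | inr s' =>
      rw [hc] at hx'
      dsimp only at hx'
      cases ho : o s' with
      | inl ts =>
        obtain ⟨t, s''⟩ := ts
        rw [ho] at hx'
        dsimp only at hx'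
        simp at hx'
      | inr s'' =>
        rw [ho] at hx'
        dsimp only at hx'
        obtain rfl : s'' = s := by simpa using hx'
        exact ⟨s', hc, ho⟩

lemma act_wsil {c d : WTm C} (hc : WSil (L2Model C) c d) :
    WSil (L2Model C) (.act f j o h ps c) (.act f j o h ps d) := by
  induction hc using Relation.ReflTransGen.head_induction_on with
  | refl => exact Relation.ReflTransGen.refl
  | head hstep _ ih => exact Relation.ReflTransGen.head (act_tau hstep) ih

lemma act_wsil_inv {c : WTm C} {x : WTm C}
    (hx : WSil (L2Model C) (.act f j o h ps c) x) :
    ∃ d, x = .act f j o h ps d ∧ WSil (L2Model C) c d := by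
  generalize hy : (WTm.act f j o h ps c : WTm C) = y at hx
  induction hx using Relation.ReflTransGen.head_induction_on generalizing c with
  | refl => exact ⟨c, hy.symm, Relation.ReflTransGen.refl⟩
  | head hstep htail ih =>
    subst hy
    obtain ⟨d, rfl, hd⟩ := act_tau_inv hstep
    obtain ⟨e, rfl, he⟩ := ih rfl
    exact ⟨e, rfl, Relation.ReflTransGen.head hd he⟩

lemma act_wout {c x : WTm C} {s : S} :
    WOut (L2Model C) (.act f j o h ps c) s x ↔
      (∃ d, WOut (L2Model C) c s d ∧ x = .act f j o h ps d) ∨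
      (∃ s' t, WDone (L2Model C) c s' ∧ o s' = .inl (t, s) ∧
        x = .run (t.subst (fun i => ps i)) s) := by
  constructor
  · rintro ⟨y, hy, ho'⟩
    obtain ⟨d, rfl, hd⟩ := act_wsil_inv hy
    rcases act_out_inv ho' with ⟨e, rfl, he⟩ | ⟨s', t, hdn, hos, rfl⟩
    · exact Or.inl ⟨e, ⟨d, hd, he⟩, rfl⟩
    · exact Or.inr ⟨s', t, ⟨d, hd, hdn⟩, hos, rfl⟩
  · rintro (⟨d, ⟨y, hy, ho'⟩, rfl⟩ | ⟨s', t, ⟨y, hy, hdn⟩, hos, rfl⟩)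
    · exact ⟨.act f j o h ps y, act_wsil hy, act_out ho'⟩
    · exact ⟨.act f j o h ps y, act_wsil hy, act_down_out hdn hos⟩

lemma act_wdone {c : WTm C} {s : S} :
    WDone (L2Model C) (.act f j o h ps c) s ↔
      ∃ s', WDone (L2Model C) c s' ∧ o s' = .inr s := by
  constructor
  · rintro ⟨y, hy, hd⟩
    obtain ⟨d, rfl, hdsil⟩ := act_wsil_inv hy
    obtain ⟨s', hdn, hos⟩ := act_down_inv hd
    exact ⟨s', ⟨d, hdsil, hdn⟩, hos⟩
  · rintro ⟨s', ⟨y, hy, hdn⟩, hos⟩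
    exact ⟨.act f j o h ps y, act_wsil hy, act_down_done hdn hos⟩

lemma act_entry : ∀ (m : ℕ) (c : WTm C) (w : S ⊕ S),
    TrcEntry (L2Model C) (.act f j o h ps c) m w ↔
      (∃ s, TrcEntry (L2Model C) c m (.inl s) ∧ w = .inl s) ∨
      (∃ s', TrcEntry (L2Model C) c m (.inr s') ∧
        ((∃ t s'', o s' = .inl (t, s'') ∧ w = .inl s'') ∨
         (∃ s'', o s' = .inr s'' ∧ w = .inr s''))) ∨
      (∃ k s' t s'', k < m ∧ TrcEntry (L2Model C) c k (.inr s') ∧ o s' = .inl (t, s'') ∧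
        TrcEntry (L2Model C) (.run (t.subst (fun i => ps i)) s'') (m - k - 1) w) := by
  intro m
  induction m with
  | zero =>
    intro c w
    refine Iff.trans trcEntry_zero ?_
    constructor
    · rintro (⟨s, d, ho', rfl⟩ | ⟨s, hd, rfl⟩)
      · rcases act_wout.1 ho' with ⟨e, he, rfl⟩ | ⟨s', t, hdn, hos, rfl⟩
        · exact Or.inl ⟨s, trcEntry_zero.2 (Or.inl ⟨s, e, he, rfl⟩), rfl⟩
        · exact Or.inr (Or.inl ⟨s', trcEntry_zero.2 (Or.inr ⟨s', hdn, rfl⟩),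
            Or.inl ⟨t, s, hos, rfl⟩⟩)
      · obtain ⟨s', hdn, hos⟩ := act_wdone.1 hd
        exact Or.inr (Or.inl ⟨s', trcEntry_zero.2 (Or.inr ⟨s', hdn, rfl⟩),
          Or.inr ⟨s, hos, rfl⟩⟩)
    · rintro (⟨s, hc, rfl⟩ | ⟨s', hc, (⟨t, s'', hos, rfl⟩ | ⟨s'', hos, rfl⟩)⟩ |
        ⟨k, s', t, s'', hk, _, _, _⟩)
      · rcases trcEntry_zero.1 hc with ⟨s1, d, ho', hv⟩ | ⟨s1, hd, hv⟩
        · obtain rfl : s = s1 := by simpa using hv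
          exact Or.inl ⟨s, .act f j o h ps d,
            act_wout.2 (Or.inl ⟨d, ho', rfl⟩), rfl⟩
        · exact absurd hv (by simp)
      · rcases trcEntry_zero.1 hc with ⟨s1, d, ho', hv⟩ | ⟨s1, hd, hv⟩
        · exact absurd hv (by simp)
        · obtain rfl : s' = s1 := by simpa using hv
          exact Or.inl ⟨s'', .run (t.subst (fun i => ps i)) s'',
            act_wout.2 (Or.inr ⟨s', t, hd, hos, rfl⟩), rfl⟩
      · rcases trcEntry_zero.1 hc with ⟨s1, d, ho', hv⟩ | ⟨s1, hd, hv⟩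
        · exact absurd hv (by simp)
        · obtain rfl : s' = s1 := by simpa using hv
          exact Or.inr ⟨s'', act_wdone.2 ⟨s', hd, hos⟩, rfl⟩
      · omega
  | succ m ih =>
    intro c w
    refine Iff.trans trcEntry_succ ?_
    constructor
    · rintro ⟨s, x, hW, hE⟩
      rcases act_wout.1 hW with ⟨d, hWc, rfl⟩ | ⟨s', t, hdn, hos, rfl⟩
      · rcases (ih d w).1 hE with ⟨s1, hc, rfl⟩ | ⟨s', hc, hrest⟩ |
          ⟨k, s', t, s'', hk, hc, hos, hcont⟩
        · exact Or.inl ⟨s1, trcEntry_succ.2 ⟨s, d, hWc, hc⟩, rfl⟩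
        · exact Or.inr (Or.inl ⟨s', trcEntry_succ.2 ⟨s, d, hWc, hc⟩, hrest⟩)
        · refine Or.inr (Or.inr ⟨k + 1, s', t, s'', by omega,
            trcEntry_succ.2 ⟨s, d, hWc, hc⟩, hos, ?_⟩)
          have he : m + 1 - (k + 1) - 1 = m - k - 1 := by omega
          rw [he]
          exact hcont
      · refine Or.inr (Or.inr ⟨0, s', t, s, by omega,
          trcEntry_zero.2 (Or.inr ⟨s', hdn, rfl⟩), hos, ?_⟩)
        simpa using hE
    · rintro (⟨s1, hc, rfl⟩ | ⟨s', hc, hrest⟩ | ⟨k, s', t, s'', hk, hc, hos, hcont⟩)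
      · obtain ⟨s, d, hWc, hE⟩ := trcEntry_succ.1 hc
        exact ⟨s, .act f j o h ps d, act_wout.2 (Or.inl ⟨d, hWc, rfl⟩),
          (ih d _).2 (Or.inl ⟨s1, hE, rfl⟩)⟩
      · obtain ⟨s, d, hWc, hE⟩ := trcEntry_succ.1 hc
        exact ⟨s, .act f j o h ps d, act_wout.2 (Or.inl ⟨d, hWc, rfl⟩),
          (ih d _).2 (Or.inr (Or.inl ⟨s', hE, hrest⟩))⟩
      · cases k with
        | zero =>
          have hdn : WDone (L2Model C) c s' := by
            rcases trcEntry_zero.1 hc with ⟨s1, d, _, hv⟩ | ⟨s1, hd, hv⟩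
            · exact absurd hv (by simp)
            · obtain rfl : s' = s1 := by simpa using hv
              exact hd
          refine ⟨s'', .run (t.subst (fun i => ps i)) s'',
            act_wout.2 (Or.inr ⟨s', t, hdn, hos, rfl⟩), ?_⟩
          simpa using hcont
        | succ k =>
          obtain ⟨s, d, hWc, hE⟩ := trcEntry_succ.1 hc
          refine ⟨s, .act f j o h ps d, act_wout.2 (Or.inl ⟨d, hWc, rfl⟩),
            (ih d _).2 (Or.inr (Or.inr ⟨k, s', t, s'', by omega, hE, hos, ?_⟩))⟩
          have he : m - k - 1 = m + 1 - (k + 1) - 1 := by omega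
          rw [he]
          exact hcont

end L2

/-! ### The substitution lemmas -/

lemma subst_entry_mp (C : CoolSpec O ar S) :
    ∀ (m : ℕ) {V : Type} (t : OTm O ar V) (σ σ' : V → Tm O ar),
      (∀ v s n w, TrcEntry (L2Model C) (.run (σ v) s) n w →
        TrcEntry (L2Model C) (.run (σ' v) s) n w) →
      ∀ s w, TrcEntry (L2Model C) (.run (t.subst σ) s) m w →
        TrcEntry (L2Model C) (.run (t.subst σ') s) m w := by
  intro m
  induction m using Nat.strong_induction_on with
  | _ m IHm =>
  intro V t
  induction t with
  | var v => intro σ σ' hσ s w hE; exact hσ v s m w hE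
  | op f bs iht =>
    intro σ σ' hσ s w hE
    simp only [OTm.subst] at hE ⊢
    rw [trcEntry_tau (tau_run (.op f fun i => (bs i).subst σ) s)] at hE
    rw [trcEntry_tau (tau_run (.op f fun i => (bs i).subst σ') s)]
    cases hmode : C.mode f with
    | inl o =>
      cases ho : o s with
      | inl ts =>
        obtain ⟨t', s1⟩ := ts
        rw [rstep2_op_passive_out hmode ho] at hE ⊢
        cases m with
        | zero =>
          rw [trcEntry_out_zero (out_out _ _)] at hE ⊢
          exact hE
        | succ n =>
          rw [trcEntry_out_succ (out_out _ _)] at hE ⊢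
          rw [← subst_comp t' bs σ] at hE
          rw [← subst_comp t' bs σ']
          exact IHm n (by omega) (t'.subst bs) σ σ' hσ s1 w hE
      | inr s1 =>
        rw [rstep2_op_passive_ret hmode ho] at hE ⊢
        cases m with
        | zero =>
          rw [trcEntry_down_zero (down_ret s1)] at hE ⊢
          exact hE
        | succ n => exact absurd hE (trcEntry_down_succ (down_ret s1))
    | inr jo =>
      obtain ⟨j, o⟩ := jo
      rw [rstep2_op_active hmode] at hE ⊢
      rw [act_entry] at hE
      rw [act_entry]
      rcases hE with ⟨s1, hc, rfl⟩ | ⟨s', hc, hrest⟩ |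
        ⟨k, s', t', s'', hk, hc, hos, hcont⟩
      · exact Or.inl ⟨s1, iht j σ σ' hσ s _ hc, rfl⟩
      · exact Or.inr (Or.inl ⟨s', iht j σ σ' hσ s _ hc, hrest⟩)
      · refine Or.inr (Or.inr ⟨k, s', t', s'', hk,
          IHm k (by omega) (bs j) σ σ' hσ s _ hc, hos, ?_⟩)
        rw [← subst_comp t' (fun i => bs i.1) σ] at hcont
        rw [← subst_comp t' (fun i => bs i.1) σ']
        exact IHm (m - k - 1) (by omega) (t'.subst fun i => bs i.1) σ σ' hσ s'' w hcont

lemma subst_done_mp (C : CoolSpec O ar S) :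
    ∀ (m : ℕ) {V : Type} (t : OTm O ar V) (σ σ' : V → Tm O ar),
      (∀ v s n sf, TrcEntry (L2Model C) (.run (σ v) s) n (.inr sf) →
        TrcEntry (L2Model C) (.run (σ' v) s) n (.inr sf)) →
      ∀ s sf, TrcEntry (L2Model C) (.run (t.subst σ) s) m (.inr sf) →
        TrcEntry (L2Model C) (.run (t.subst σ') s) m (.inr sf) := by
  intro m
  induction m using Nat.strong_induction_on with
  | _ m IHm =>
  intro V t
  induction t with
  | var v => intro σ σ' hσ s sf hE; exact hσ v s m sf hE
  | op f bs iht =>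
    intro σ σ' hσ s sf hE
    simp only [OTm.subst] at hE ⊢
    rw [trcEntry_tau (tau_run (.op f fun i => (bs i).subst σ) s)] at hE
    rw [trcEntry_tau (tau_run (.op f fun i => (bs i).subst σ') s)]
    cases hmode : C.mode f with
    | inl o =>
      cases ho : o s with
      | inl ts =>
        obtain ⟨t', s1⟩ := ts
        rw [rstep2_op_passive_out hmode ho] at hE ⊢
        cases m with
        | zero =>
          rw [trcEntry_out_zero (out_out _ _)] at hE
          exact absurd hE (by simp)
        | succ n =>
          rw [trcEntry_out_succ (out_out _ _)] at hE ⊢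
          rw [← subst_comp t' bs σ] at hE
          rw [← subst_comp t' bs σ']
          exact IHm n (by omega) (t'.subst bs) σ σ' hσ s1 sf hE
      | inr s1 =>
        rw [rstep2_op_passive_ret hmode ho] at hE ⊢
        cases m with
        | zero =>
          rw [trcEntry_down_zero (down_ret s1)] at hE ⊢
          exact hE
        | succ n => exact absurd hE (trcEntry_down_succ (down_ret s1))
    | inr jo =>
      obtain ⟨j, o⟩ := jo
      rw [rstep2_op_active hmode] at hE ⊢
      rw [act_entry] at hE
      rw [act_entry]
      rcases hE with ⟨s1, hc, heq⟩ | ⟨s', hc, hrest⟩ |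
        ⟨k, s', t', s'', hk, hc, hos, hcont⟩
      · exact absurd heq (by simp)
      · exact Or.inr (Or.inl ⟨s', iht j σ σ' hσ s _ hc, hrest⟩)
      · refine Or.inr (Or.inr ⟨k, s', t', s'', hk,
          IHm k (by omega) (bs j) σ σ' hσ s _ hc, hos, ?_⟩)
        rw [← subst_comp t' (fun i => bs i.1) σ] at hcont
        rw [← subst_comp t' (fun i => bs i.1) σ']
        exact IHm (m - k - 1) (by omega) (t'.subst fun i => bs i.1) σ σ' hσ s'' sf hcont

lemma subst_term_mp (C : CoolSpec O ar S) :
    ∀ (m : ℕ) {V : Type} (t : OTm O ar V) (σ σ' : V → Tm O ar),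
      (∀ v s sf, (∃ n, TrcEntry (L2Model C) (.run (σ v) s) n (.inr sf)) →
        (∃ n, TrcEntry (L2Model C) (.run (σ' v) s) n (.inr sf))) →
      ∀ s sf, TrcEntry (L2Model C) (.run (t.subst σ) s) m (.inr sf) →
        ∃ n, TrcEntry (L2Model C) (.run (t.subst σ') s) n (.inr sf) := by
  intro m
  induction m using Nat.strong_induction_on with
  | _ m IHm =>
  intro V t
  induction t with
  | var v => intro σ σ' hσ s sf hE; exact hσ v s sf ⟨m, hE⟩
  | op f bs iht =>
    intro σ σ' hσ s sf hE
    simp only [OTm.subst] at hE ⊢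
    rw [trcEntry_tau (tau_run (.op f fun i => (bs i).subst σ) s)] at hE
    simp only [trcEntry_tau (tau_run (.op f fun i => (bs i).subst σ') s)]
    cases hmode : C.mode f with
    | inl o =>
      cases ho : o s with
      | inl ts =>
        obtain ⟨t', s1⟩ := ts
        rw [rstep2_op_passive_out hmode ho] at hE
        simp only [rstep2_op_passive_out hmode ho]
        cases m with
        | zero =>
          rw [trcEntry_out_zero (out_out _ _)] at hE
          exact absurd hE (by simp)
        | succ n =>
          rw [trcEntry_out_succ (out_out _ _)] at hE
          rw [← subst_comp t' bs σ] at hE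
          obtain ⟨n2, h2⟩ := IHm n (by omega) (t'.subst bs) σ σ' hσ s1 sf hE
          refine ⟨n2 + 1, ?_⟩
          rw [trcEntry_out_succ (out_out _ _), ← subst_comp t' bs σ']
          exact h2
      | inr s1 =>
        rw [rstep2_op_passive_ret hmode ho] at hE
        simp only [rstep2_op_passive_ret hmode ho]
        cases m with
        | zero =>
          rw [trcEntry_down_zero (down_ret s1)] at hE
          exact ⟨0, (trcEntry_down_zero (down_ret s1)).2 hE⟩
        | succ n => exact absurd hE (trcEntry_down_succ (down_ret s1))
    | inr jo =>
      obtain ⟨j, o⟩ := jo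
      rw [rstep2_op_active hmode] at hE
      simp only [rstep2_op_active hmode]
      rw [act_entry] at hE
      rcases hE with ⟨s1, hc, heq⟩ | ⟨s', hc, hrest⟩ |
        ⟨k, s', t', s'', hk, hc, hos, hcont⟩
      · exact absurd heq (by simp)
      · rcases hrest with ⟨t', s'', hos, heq⟩ | ⟨s'', hos, heq⟩
        · exact absurd heq (by simp)
        · obtain rfl : sf = s'' := by simpa using heq
          obtain ⟨k2, hc2⟩ := iht j σ σ' hσ s s' hc
          exact ⟨k2, (act_entry k2 _ _).2
            (Or.inr (Or.inl ⟨s', hc2, Or.inr ⟨sf, hos, rfl⟩⟩))⟩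
      · obtain ⟨k2, hc2⟩ := IHm k (by omega) (bs j) σ σ' hσ s s' hc
        rw [← subst_comp t' (fun i => bs i.1) σ] at hcont
        obtain ⟨m2, hc3⟩ :=
          IHm (m - k - 1) (by omega) (t'.subst fun i => bs i.1) σ σ' hσ s'' sf hcont
        refine ⟨k2 + 1 + m2, (act_entry _ _ _).2
          (Or.inr (Or.inr ⟨k2, s', t', s'', by omega, hc2, hos, ?_⟩))⟩
        have he : k2 + 1 + m2 - k2 - 1 = m2 := by omega
        rw [he, ← subst_comp t' (fun i => bs i.1) σ']
        exact hc3

/-! ### Reader-level characterizations -/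

section RLevel

variable {C : CoolSpec O ar S}

lemma L2_rstep : (L2Model C).rstep = rstep2 C := rfl

lemma trcR_eq_iff {p p' : Tm O ar} :
    trcR (L2Model C) p = trcR (L2Model C) p' ↔
      ∀ s n w, (TrcEntry (L2Model C) (.run p s) n w ↔
        TrcEntry (L2Model C) (.run p' s) n w) := by
  unfold trcR
  constructor
  · intro hh s n w
    rw [trcEntry_tau (tau_run p s), trcEntry_tau (tau_run p' s)]
    exact trcW_eq_iff.1 (congrFun hh s) n w
  · intro hh
    funext s
    refine trcW_eq_iff.2 fun n w => ?_
    simp only [L2_rstep]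
    rw [← trcEntry_tau (tau_run p s), ← trcEntry_tau (tau_run p' s)]
    exact hh s n w

lemma cstR_eq_iff {p p' : Tm O ar} :
    cstR (L2Model C) p = cstR (L2Model C) p' ↔
      ∀ s n sf, (TrcEntry (L2Model C) (.run p s) n (.inr sf) ↔
        TrcEntry (L2Model C) (.run p' s) n (.inr sf)) := by
  unfold cstR
  constructor
  · intro hh s n sf
    rw [trcEntry_tau (tau_run p s), trcEntry_tau (tau_run p' s)]
    exact cstW_eq_iff.1 (congrFun hh s) n sf
  · intro hh
    funext s
    refine cstW_eq_iff.2 fun n sf => ?_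
    simp only [L2_rstep]
    rw [← trcEntry_tau (tau_run p s), ← trcEntry_tau (tau_run p' s)]
    exact hh s n sf

lemma terR_eq_iff {p p' : Tm O ar} :
    terR (L2Model C) p = terR (L2Model C) p' ↔
      ∀ s sf, ((∃ n, TrcEntry (L2Model C) (.run p s) n (.inr sf)) ↔
        (∃ n, TrcEntry (L2Model C) (.run p' s) n (.inr sf))) := by
  unfold terR cstR
  constructor
  · intro hh s sf
    simp only [trcEntry_tau (tau_run p s), trcEntry_tau (tau_run p' s)]
    exact terW_eq_iff.1 (congrFun hh s) sf
  · intro hh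
    funext s
    refine terW_eq_iff.2 fun sf => ?_
    simp only [L2_rstep]
    simp only [← trcEntry_tau (tau_run p s), ← trcEntry_tau (tau_run p' s)]
    exact hh s sf

variable {f : O} {j : Fin (ar f)}
    {o : S → (OTm O ar {i : Fin (ar f) // i ≠ j} × S) ⊕ S}
    {h : C.mode f = .inr ⟨j, o⟩} {ps ps' : {i : Fin (ar f) // i ≠ j} → Tm O ar}

lemma act_congr_trc {c c' : WTm C}
    (hcE : ∀ n w, TrcEntry (L2Model C) c n w → TrcEntry (L2Model C) c' n w)
    (hσ : ∀ v s n w, TrcEntry (L2Model C) (.run (ps v) s) n w →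
      TrcEntry (L2Model C) (.run (ps' v) s) n w)
    {n : ℕ} {w : S ⊕ S} (hE : TrcEntry (L2Model C) (.act f j o h ps c) n w) :
    TrcEntry (L2Model C) (.act f j o h ps' c') n w := by
  rw [act_entry] at hE
  rw [act_entry]
  rcases hE with ⟨s1, hc, rfl⟩ | ⟨s', hc, hrest⟩ |
    ⟨k, s', t', s'', hk, hc, hos, hcont⟩
  · exact Or.inl ⟨s1, hcE n _ hc, rfl⟩
  · exact Or.inr (Or.inl ⟨s', hcE n _ hc, hrest⟩)
  · exact Or.inr (Or.inr ⟨k, s', t', s'', hk, hcE k _ hc, hos,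
      subst_entry_mp C (n - k - 1) t' ps ps' hσ s'' w hcont⟩)

lemma act_congr_done {c c' : WTm C}
    (hcE : ∀ n sf, TrcEntry (L2Model C) c n (.inr sf) →
      TrcEntry (L2Model C) c' n (.inr sf))
    (hσ : ∀ v s n sf, TrcEntry (L2Model C) (.run (ps v) s) n (.inr sf) →
      TrcEntry (L2Model C) (.run (ps' v) s) n (.inr sf))
    {n : ℕ} {sf : S} (hE : TrcEntry (L2Model C) (.act f j o h ps c) n (.inr sf)) :
    TrcEntry (L2Model C) (.act f j o h ps' c') n (.inr sf) := by
  rw [act_entry] at hE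
  rw [act_entry]
  rcases hE with ⟨s1, hc, heq⟩ | ⟨s', hc, hrest⟩ |
    ⟨k, s', t', s'', hk, hc, hos, hcont⟩
  · exact absurd heq (by simp)
  · exact Or.inr (Or.inl ⟨s', hcE n _ hc, hrest⟩)
  · exact Or.inr (Or.inr ⟨k, s', t', s'', hk, hcE k _ hc, hos,
      subst_done_mp C (n - k - 1) t' ps ps' hσ s'' sf hcont⟩)

lemma act_congr_term {c c' : WTm C}
    (hcE : ∀ sf, (∃ n, TrcEntry (L2Model C) c n (.inr sf)) →
      (∃ n, TrcEntry (L2Model C) c' n (.inr sf)))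
    (hσ : ∀ v s sf, (∃ n, TrcEntry (L2Model C) (.run (ps v) s) n (.inr sf)) →
      (∃ n, TrcEntry (L2Model C) (.run (ps' v) s) n (.inr sf)))
    {sf : S} (hE : ∃ n, TrcEntry (L2Model C) (.act f j o h ps c) n (.inr sf)) :
    ∃ n, TrcEntry (L2Model C) (.act f j o h ps' c') n (.inr sf) := by
  obtain ⟨n, hE⟩ := hE
  rw [act_entry] at hE
  rcases hE with ⟨s1, hc, heq⟩ | ⟨s', hc, hrest⟩ |
    ⟨k, s', t', s'', hk, hc, hos, hcont⟩
  · exact absurd heq (by simp)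
  · rcases hrest with ⟨t', s'', hos, heq⟩ | ⟨s'', hos, heq⟩
    · exact absurd heq (by simp)
    · obtain rfl : sf = s'' := by simpa using heq
      obtain ⟨k2, hc2⟩ := hcE s' ⟨n, hc⟩
      exact ⟨k2, (act_entry k2 _ _).2
        (Or.inr (Or.inl ⟨s', hc2, Or.inr ⟨sf, hos, rfl⟩⟩))⟩
  · obtain ⟨k2, hc2⟩ := hcE s' ⟨k, hc⟩
    obtain ⟨m2, hc3⟩ := subst_term_mp C (n - k - 1) t' ps ps' hσ s'' sf hcont
    refine ⟨k2 + 1 + m2, (act_entry _ _ _).2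
      (Or.inr (Or.inr ⟨k2, s', t', s'', by omega, hc2, hos, ?_⟩))⟩
    have he : k2 + 1 + m2 - k2 - 1 = m2 := by omega
    rw [he]
    exact hc3

end RLevel

/-- for every cool stateful SOS specification, trace equivalence,
cost equivalence and termination equivalence are congruences on the operational
model of its reader–writer extension `L²`. -/
theorem l2_congruence (C : CoolSpec O ar S) :
    IsCongrL2 C (fun p p' => trcR (L2Model C) p = trcR (L2Model C) p')
      (fun c c' => trcW (L2Model C) c = trcW (L2Model C) c') ∧
    IsCongrL2 C (fun p p' => cstR (L2Model C) p = cstR (L2Model C) p')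
      (fun c c' => cstW (L2Model C) c = cstW (L2Model C) c') ∧
    IsCongrL2 C (fun p p' => terR (L2Model C) p = terR (L2Model C) p')
      (fun c c' => terW (L2Model C) c = terW (L2Model C) c') := by
  refine ⟨⟨?_, ?_, ?_, ?_, ?_⟩, ⟨?_, ?_, ?_, ?_, ?_⟩, ⟨?_, ?_, ?_, ?_, ?_⟩⟩
  -- trace, op
  · intro f as as' has
    have h1 : ∀ v s n w, TrcEntry (L2Model C) (.run (as v) s) n w →
        TrcEntry (L2Model C) (.run (as' v) s) n w :=
      fun v s n w => (trcR_eq_iff.1 (has v) s n w).1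
    have h2 : ∀ v s n w, TrcEntry (L2Model C) (.run (as' v) s) n w →
        TrcEntry (L2Model C) (.run (as v) s) n w :=
      fun v s n w => (trcR_eq_iff.1 (has v) s n w).2
    refine trcR_eq_iff.2 fun s n w => ⟨?_, ?_⟩
    · intro hE
      exact subst_entry_mp C n (.op f fun i => .var i) as as' h1 s w hE
    · intro hE
      exact subst_entry_mp C n (.op f fun i => .var i) as' as h2 s w hE
  -- trace, run
  · intro p p' s hp
    exact trcW_eq_iff.2 fun n w => trcR_eq_iff.1 hp s n w
  -- trace, ret
  · intro s; rfl
  -- trace, out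
  · intro s c c' hc
    have hh := trcW_eq_iff.1 hc
    refine trcW_eq_iff.2 fun n w => ?_
    cases n with
    | zero => rw [trcEntry_out_zero (out_out s c), trcEntry_out_zero (out_out s c')]
    | succ n =>
      rw [trcEntry_out_succ (out_out s c), trcEntry_out_succ (out_out s c')]
      exact hh n w
  -- trace, act
  · intro f j o hm ps ps' c c' hps hc
    have hh := trcW_eq_iff.1 hc
    have h1 : ∀ v s n w, TrcEntry (L2Model C) (.run (ps v) s) n w →
        TrcEntry (L2Model C) (.run (ps' v) s) n w :=
      fun v s n w => (trcR_eq_iff.1 (hps v) s n w).1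
    have h2 : ∀ v s n w, TrcEntry (L2Model C) (.run (ps' v) s) n w →
        TrcEntry (L2Model C) (.run (ps v) s) n w :=
      fun v s n w => (trcR_eq_iff.1 (hps v) s n w).2
    exact trcW_eq_iff.2 fun n w =>
      ⟨act_congr_trc (fun n w => (hh n w).1) h1,
       act_congr_trc (fun n w => (hh n w).2) h2⟩
  -- cost, op
  · intro f as as' has
    have h1 : ∀ v s n sf, TrcEntry (L2Model C) (.run (as v) s) n (.inr sf) →
        TrcEntry (L2Model C) (.run (as' v) s) n (.inr sf) :=
      fun v s n sf => (cstR_eq_iff.1 (has v) s n sf).1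
    have h2 : ∀ v s n sf, TrcEntry (L2Model C) (.run (as' v) s) n (.inr sf) →
        TrcEntry (L2Model C) (.run (as v) s) n (.inr sf) :=
      fun v s n sf => (cstR_eq_iff.1 (has v) s n sf).2
    refine cstR_eq_iff.2 fun s n sf => ⟨?_, ?_⟩
    · intro hE
      exact subst_done_mp C n (.op f fun i => .var i) as as' h1 s sf hE
    · intro hE
      exact subst_done_mp C n (.op f fun i => .var i) as' as h2 s sf hE
  -- cost, run
  · intro p p' s hp
    exact cstW_eq_iff.2 fun n sf => cstR_eq_iff.1 hp s n sf
  -- cost, ret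
  · intro s; rfl
  -- cost, out
  · intro s c c' hc
    have hh := cstW_eq_iff.1 hc
    refine cstW_eq_iff.2 fun n sf => ?_
    cases n with
    | zero => rw [trcEntry_out_zero (out_out s c), trcEntry_out_zero (out_out s c')]
    | succ n =>
      rw [trcEntry_out_succ (out_out s c), trcEntry_out_succ (out_out s c')]
      exact hh n sf
  -- cost, act
  · intro f j o hm ps ps' c c' hps hc
    have hh := cstW_eq_iff.1 hc
    have h1 : ∀ v s n sf, TrcEntry (L2Model C) (.run (ps v) s) n (.inr sf) →
        TrcEntry (L2Model C) (.run (ps' v) s) n (.inr sf) :=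
      fun v s n sf => (cstR_eq_iff.1 (hps v) s n sf).1
    have h2 : ∀ v s n sf, TrcEntry (L2Model C) (.run (ps' v) s) n (.inr sf) →
        TrcEntry (L2Model C) (.run (ps v) s) n (.inr sf) :=
      fun v s n sf => (cstR_eq_iff.1 (hps v) s n sf).2
    exact cstW_eq_iff.2 fun n sf =>
      ⟨act_congr_done (fun n sf => (hh n sf).1) h1,
       act_congr_done (fun n sf => (hh n sf).2) h2⟩
  -- termination, op
  · intro f as as' has
    have h1 : ∀ v s sf, (∃ n, TrcEntry (L2Model C) (.run (as v) s) n (.inr sf)) →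
        (∃ n, TrcEntry (L2Model C) (.run (as' v) s) n (.inr sf)) :=
      fun v s sf => (terR_eq_iff.1 (has v) s sf).1
    have h2 : ∀ v s sf, (∃ n, TrcEntry (L2Model C) (.run (as' v) s) n (.inr sf)) →
        (∃ n, TrcEntry (L2Model C) (.run (as v) s) n (.inr sf)) :=
      fun v s sf => (terR_eq_iff.1 (has v) s sf).2
    refine terR_eq_iff.2 fun s sf => ⟨?_, ?_⟩
    · rintro ⟨n, hE⟩
      exact subst_term_mp C n (.op f fun i => .var i) as as' h1 s sf hE
    · rintro ⟨n, hE⟩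
      exact subst_term_mp C n (.op f fun i => .var i) as' as h2 s sf hE
  -- termination, run
  · intro p p' s hp
    exact terW_eq_iff.2 fun sf => terR_eq_iff.1 hp s sf
  -- termination, ret
  · intro s; rfl
  -- termination, out
  · intro s c c' hc
    have hh := terW_eq_iff.1 hc
    refine terW_eq_iff.2 fun sf => ⟨?_, ?_⟩
    · rintro ⟨n, hE⟩
      cases n with
      | zero =>
        rw [trcEntry_out_zero (out_out s c)] at hE
        exact absurd hE (by simp)
      | succ n =>
        rw [trcEntry_out_succ (out_out s c)] at hE
        obtain ⟨n2, h2⟩ := (hh sf).1 ⟨n, hE⟩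
        exact ⟨n2 + 1, (trcEntry_out_succ (out_out s c')).2 h2⟩
    · rintro ⟨n, hE⟩
      cases n with
      | zero =>
        rw [trcEntry_out_zero (out_out s c')] at hE
        exact absurd hE (by simp)
      | succ n =>
        rw [trcEntry_out_succ (out_out s c')] at hE
        obtain ⟨n2, h2⟩ := (hh sf).2 ⟨n, hE⟩
        exact ⟨n2 + 1, (trcEntry_out_succ (out_out s c)).2 h2⟩
  -- termination, act
  · intro f j o hm ps ps' c c' hps hc
    have hh := terW_eq_iff.1 hc
    have h1 : ∀ v s sf, (∃ n, TrcEntry (L2Model C) (.run (ps v) s) n (.inr sf)) →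
        (∃ n, TrcEntry (L2Model C) (.run (ps' v) s) n (.inr sf)) :=
      fun v s sf => (terR_eq_iff.1 (hps v) s sf).1
    have h2 : ∀ v s sf, (∃ n, TrcEntry (L2Model C) (.run (ps' v) s) n (.inr sf)) →
        (∃ n, TrcEntry (L2Model C) (.run (ps v) s) n (.inr sf)) :=
      fun v s sf => (terR_eq_iff.1 (hps v) s sf).2
    exact terW_eq_iff.2 fun sf =>
      ⟨act_congr_term (fun sf => (hh sf).1) h1,
       act_congr_term (fun sf => (hh sf).2) h2⟩

end SOS
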